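/- Let D ≥ 1, each 𝒳^d finite, 𝒳 = ∏_d 𝒳^d. Fix x_0 ∈ 𝒳 and strictly positive probability mass functions q^d(· | x_0^d) on 𝒳^d; let q(x | x_0) := ∏_d q^d(x^d | x_0^d). Let S^d : 𝒳^d × 𝒳^d → ℝ_{>0} be arbitrary positive functions and define the unnormalized kernel S(z | x) := (1 − δ_{z,x}) Σ_d S^d(z^d | x^d) δ_{z^{∖d}, x^{∖d}} with normalizer 𝒮(x) := Σ_z S(z | x) (assume 𝒮(x) > 0 for all x). Let q̃(z | x_0) := Σ_x q(x | x_0) S(z | x)/𝒮(x) be the law of z obtained by first sampling x ∼ q(· | x_0) and then z ∼ S(· | x)/𝒮(x). Then for every z ∈ 𝒳, q̃(z | x_0) = q(z | x_0) · M(z | x_0), where M(z | x_0) := Σ_{d=1}^D Σ_{w ∈ 𝒳^d, w ≠ z^d} (q^d(w | x_0^d)/q^d(z^d | x_0^d)) · S^d(z^d | w)/𝒮(w ∘ z^{∖d}), and w ∘ z^{∖d} denotes z with coordinate d replaced by w. -/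

import Mathlib

/-- Unnormalized single-coordinate-change proposal kernel
`S(z|x) = (1 − δ_{z,x}) Σ_d S^d(z^d|x^d) δ_{z^{∖d},x^{∖d}}`. -/
def Sker {D : ℕ} {X : Fin D → Type*} [∀ d, Fintype (X d)] [∀ d, DecidableEq (X d)]
    (Sd : ∀ d, X d → X d → ℝ) (z x : ∀ d, X d) : ℝ :=
  (if z = x then 0 else 1)
    * ∑ d, Sd d (z d) (x d) * (if ∀ e, e ≠ d → z e = x e then (1 : ℝ) else 0)

/-- The law `q̃(z|x_0)` of `z` obtained by sampling `x ∼ q(·|x_0)` and then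
`z ∼ S(·|x)/𝒮(x)` satisfies `q̃(z|x_0) = q(z|x_0) · M(z|x_0)`, where
`M(z|x_0) = Σ_d Σ_{w ≠ z^d} (q^d(w|x_0^d)/q^d(z^d|x_0^d)) S^d(z^d|w)/𝒮(w ∘ z^{∖d})`. -/
theorem auxiliary_law_eq_marginal_times_normalizer
    {D : ℕ} (hD : 1 ≤ D) {X : Fin D → Type*}
    [∀ d, Fintype (X d)] [∀ d, DecidableEq (X d)]
    (qd : ∀ d, X d → ℝ)  -- `qd d v = q^d(v | x_0^d)`
    (hqd_pos : ∀ d v, 0 < qd d v) (hqd_sum : ∀ d, ∑ v, qd d v = 1)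
    (Sd : ∀ d, X d → X d → ℝ)  -- `Sd d b a = S^d(b | a)`
    (hSd_pos : ∀ d b a, 0 < Sd d b a)
    (hSnorm_pos : ∀ x : ∀ d, X d, 0 < ∑ z, Sker Sd z x) :
    ∀ z : ∀ d, X d,
      (∑ x, (∏ d, qd d (x d)) * (Sker Sd z x / ∑ z', Sker Sd z' x))
        = (∏ d, qd d (z d))
            * ∑ d, ∑ w ∈ Finset.univ.erase (z d),
                (qd d w / qd d (z d)) * Sd d (z d) w
                  / ∑ z', Sker Sd z' (Function.update z d w) := by
  classical
  intro z
  set g : (∀ d, X d) → ℝ :=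
    fun x => (∏ d, qd d (x d)) * (Sker Sd z x / ∑ z', Sker Sd z' x) with hg
  -- value of the kernel at a single-coordinate update
  have hB : ∀ (d : Fin D) (w : X d), w ≠ z d →
      Sker Sd z (Function.update z d w) = Sd d (z d) w := by
    intro d w hw
    unfold Sker
    rw [if_neg, one_mul]
    · rw [Finset.sum_eq_single d]
      · rw [Function.update_self, if_pos, mul_one]
        intro e he
        rw [Function.update_of_ne he]
      · intro e _ he
        rw [if_neg, mul_zero]
        intro h
        have := h d (Ne.symm he)
        rw [Function.update_self] at this
        exact hw this.symm
      · intro h; exact absurd (Finset.mem_univ d) h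
    · intro h
      have := congrFun h d
      rw [Function.update_self] at this
      exact hw this.symm
  -- the kernel vanishes off single-coordinate updates
  have hA : ∀ x : ∀ d, X d,
      (∀ (d : Fin D) (w : X d), w ≠ z d → x ≠ Function.update z d w) →
      Sker Sd z x = 0 := by
    intro x hx
    unfold Sker
    by_cases hzx : z = x
    · rw [if_pos hzx, zero_mul]
    · rw [if_neg hzx, one_mul]
      apply Finset.sum_eq_zero
      intro d _
      rw [if_neg, mul_zero]
      intro h
      have hxd : x d ≠ z d := by
        intro hxd
        apply hzx
        funext e
        by_cases hed : e = d
        · subst hed; exact hxd.symm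
        · exact h e hed
      apply hx d (x d) hxd
      funext e
      by_cases hed : e = d
      · subst hed; rw [Function.update_self]
      · rw [Function.update_of_ne hed]
        exact (h e hed).symm
  -- value of g at a single-coordinate update
  have key : ∀ (d : Fin D) (w : X d), w ≠ z d →
      g (Function.update z d w)
        = (∏ e, qd e (z e)) * ((qd d w / qd d (z d)) * Sd d (z d) w
            / ∑ z', Sker Sd z' (Function.update z d w)) := by
    intro d w hw
    have h1 : (∏ e, qd e (Function.update z d w e))
        = qd d w * ∏ e ∈ Finset.univ.erase d, qd e (z e) := by
      rw [← Finset.mul_prod_erase Finset.univ _ (Finset.mem_univ d),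
        Function.update_self]
      congr 1
      apply Finset.prod_congr rfl
      intro e he
      rw [Function.update_of_ne (Finset.ne_of_mem_erase he)]
    have h2 : (∏ e, qd e (z e))
        = qd d (z d) * ∏ e ∈ Finset.univ.erase d, qd e (z e) :=
      (Finset.mul_prod_erase Finset.univ _ (Finset.mem_univ d)).symm
    have hq : qd d (z d) ≠ 0 := (hqd_pos d (z d)).ne'
    rw [hg]
    simp only
    rw [h1, h2, hB d w hw]
    field_simp
  set s : Finset (∀ d, X d) :=
    (Finset.univ.sigma fun d => Finset.univ.erase (z d)).image
      (fun p : Σ d, X d => Function.update z p.1 p.2) with hs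
  have hsub : ∑ x, g x = ∑ x ∈ s, g x := by
    symm
    apply Finset.sum_subset (Finset.subset_univ s)
    intro x _ hxs
    have hx : ∀ (d : Fin D) (w : X d), w ≠ z d → x ≠ Function.update z d w := by
      intro d w hw hxe
      apply hxs
      rw [hs]
      apply Finset.mem_image.2
      exact ⟨⟨d, w⟩, Finset.mem_sigma.2 ⟨Finset.mem_univ d,
        Finset.mem_erase.2 ⟨hw, Finset.mem_univ w⟩⟩, hxe.symm⟩
    rw [hg]
    simp [hA x hx]
  have himg : ∑ x ∈ s, g x
      = ∑ p ∈ (Finset.univ.sigma fun d => Finset.univ.erase (z d)),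
          g (Function.update z p.1 p.2) := by
    rw [hs]
    apply Finset.sum_image
    rintro ⟨d1, w1⟩ hp ⟨d2, w2⟩ hq hpq
    simp only [Finset.mem_coe, Finset.mem_sigma, Finset.mem_erase] at hp hq
    by_cases hdd : d1 = d2
    · subst hdd
      have := congrFun hpq d1
      simp only [Function.update_self] at this
      simp [this]
    · exfalso
      have := congrFun hpq d1
      beta_reduce at this
      rw [Function.update_self, Function.update_of_ne hdd] at this
      exact hp.2.1 this
  calc (∑ x, g x) = ∑ x ∈ s, g x := hsub
    _ = ∑ d, ∑ w ∈ Finset.univ.erase (z d), g (Function.update z d w) := by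
        rw [himg, Finset.sum_sigma]
    _ = ∑ d, ∑ w ∈ Finset.univ.erase (z d),
          (∏ e, qd e (z e)) * ((qd d w / qd d (z d)) * Sd d (z d) w
            / ∑ z', Sker Sd z' (Function.update z d w)) := by
        refine Finset.sum_congr rfl fun d _ => Finset.sum_congr rfl fun w hw => ?_
        exact key d w (Finset.ne_of_mem_erase hw)
    _ = _ := by
        rw [Finset.mul_sum]
        exact Finset.sum_congr rfl fun d _ => (Finset.mul_sum _ _ _).symm
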